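/- Let $S = (s_{pq})_{2\le p,q\le n}$ with $s_{pp} = 2\sigma_{n-2}(\lambda|1) + 2\sigma_{n-2}(\lambda|p)$ and $s_{pq} = \sigma_{n-2}(\lambda|1) + (\lambda_p + \lambda_q - 2\lambda_1)\sigma_{n-3}(\lambda|1pq)$ for $p\neq q$. If $\lambda \in \Gamma_{n-1}$, $\sigma_{n-1}(\lambda) = 1$, and $\lambda_1 \le 0$, then the quadratic form $Q_S(\xi) = \sum_{p,q} s_{pq}\xi_p\xi_q \ge 0$ for all $\xi \in \mathbb{R}^{n-1}$, i.e., $S$ is positive semidefinite. -/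

import Mathlib

open Finset

/-- The `k`-th elementary symmetric polynomial of the values of `lam` on the index set `s`. -/
noncomputable def esym {n : ℕ} (k : ℕ) (s : Finset (Fin n)) (lam : Fin n → ℝ) : ℝ :=
  ∑ t ∈ s.powersetCard k, ∏ i ∈ t, lam i


lemma esym_zero {n : ℕ} (s : Finset (Fin n)) (lam : Fin n → ℝ) : esym 0 s lam = 1 := by
  simp [esym]

lemma esym_top {n : ℕ} (s : Finset (Fin n)) (lam : Fin n → ℝ) :
    esym s.card s lam = ∏ i ∈ s, lam i := by
  rw [esym, powersetCard_self, sum_singleton]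

lemma powersetCard_pred {n : ℕ} (s : Finset (Fin n)) (hs : s.Nonempty) :
    s.powersetCard (s.card - 1) = s.image (s.erase ·) := by
  ext t
  simp only [mem_powersetCard, mem_image]
  constructor
  · rintro ⟨hsub, hcard⟩
    have hc : (s \ t).card = 1 := by
      rw [card_sdiff_of_subset hsub, hcard]
      have := card_pos.2 hs
      omega
    obtain ⟨a, ha⟩ := card_eq_one.1 hc
    have haa : a ∈ s := by
      have : a ∈ s \ t := by rw [ha]; exact mem_singleton_self a
      exact (mem_sdiff.1 this).1
    refine ⟨a, haa, ?_⟩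
    rw [← sdiff_singleton_eq_erase, ← ha, sdiff_sdiff_right_self]
    exact (inf_eq_right.2 hsub).symm ▸ rfl
  · rintro ⟨a, ha, rfl⟩
    exact ⟨erase_subset _ _, by rw [card_erase_of_mem ha]⟩

lemma esym_pred {n : ℕ} (s : Finset (Fin n)) (lam : Fin n → ℝ) (hs : s.Nonempty) :
    esym (s.card - 1) s lam = ∑ a ∈ s, ∏ i ∈ s.erase a, lam i := by
  rw [esym, powersetCard_pred s hs, sum_image]
  intro a ha b hb hab
  by_contra hne
  have : a ∈ s.erase b := mem_erase.2 ⟨hne, ha⟩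
  rw [← show s.erase a = s.erase b from hab] at this
  exact (notMem_erase a s) this

lemma prod_X_add {n : ℕ} (lam : Fin n → ℝ) (x : ℝ) :
    ∏ i, (lam i + x) = ∑ k ∈ range (n + 1), esym k univ lam * x ^ (n - k) := by
  rw [Finset.prod_add, Finset.powerset_card_disjiUnion]
  refine (Finset.sum_disjiUnion _ _ _).trans ?_
  apply Finset.sum_congr (by rw [card_univ, Fintype.card_fin])
  intro k hk
  rw [esym, Finset.sum_mul]
  apply Finset.sum_congr rfl
  intro t ht
  obtain ⟨hsub, hcard⟩ := mem_powersetCard.1 ht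
  rw [Finset.prod_const, Finset.card_sdiff_of_subset hsub, card_univ, Fintype.card_fin, hcard]

-- growth estimate: for 0 ≤ u ≤ x, g x - g u ≥ σ_{n-1} (x - u)
lemma grow {n : ℕ} (lam : Fin n → ℝ) (hn : 2 ≤ n)
    (hΓ : ∀ m : ℕ, 1 ≤ m → m ≤ n - 1 → 0 < esym m Finset.univ lam)
    {u x : ℝ} (hu : 0 ≤ u) (hux : u ≤ x) :
    esym (n-1) univ lam * (x - u) ≤ (∏ i, (lam i + x)) - ∏ i, (lam i + u) := by
  rw [prod_X_add, prod_X_add, ← Finset.sum_sub_distrib]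
  have hterm : ∀ k ∈ range (n+1), 0 ≤ esym k univ lam * x ^ (n-k) - esym k univ lam * u ^ (n-k) := by
    intro k hk
    rw [← mul_sub]
    rcases eq_or_lt_of_le (Nat.lt_succ_iff.1 (mem_range.1 hk)) with h | h
    · subst h; simp
    · apply mul_nonneg
      · rcases Nat.eq_zero_or_pos k with h0 | h0
        · subst h0; rw [esym_zero]; norm_num
        · exact le_of_lt (hΓ k h0 (by omega))
      · have := pow_le_pow_left₀ hu hux (n - k)
        linarith
  have hmem : n - 1 ∈ range (n+1) := mem_range.2 (by omega)
  have := Finset.single_le_sum hterm hmem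
  have harith : n - (n - 1) = 1 := by omega
  rw [harith, pow_one, pow_one, ← mul_sub] at this
  calc esym (n-1) univ lam * (x - u)
      ≤ ∑ k ∈ range (n+1), (esym k univ lam * x ^ (n-k) - esym k univ lam * u ^ (n-k)) := this
    _ = _ := by rw [Finset.sum_sub_distrib]

lemma lam_pos {n : ℕ} (lam : Fin n → ℝ) (i₀ : Fin n) (hn : 2 ≤ n)
    (hΓ : ∀ m : ℕ, 1 ≤ m → m ≤ n - 1 → 0 < esym m Finset.univ lam)
    (h1 : lam i₀ ≤ 0) : ∀ j, j ≠ i₀ → 0 < lam j := by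
  intro j hj
  by_contra hcon
  push_neg at hcon
  set u : ℝ := -lam i₀ with hu_def
  set v : ℝ := -lam j with hv_def
  have hu : 0 ≤ u := by simp [hu_def]; linarith
  have hv : 0 ≤ v := by simp [hv_def]; linarith
  have hσ : 0 < esym (n-1) univ lam := hΓ (n-1) (by omega) le_rfl
  have gu : ∏ i, (lam i + u) = 0 := Finset.prod_eq_zero (mem_univ i₀) (by simp [hu_def])
  have gv : ∏ i, (lam i + v) = 0 := Finset.prod_eq_zero (mem_univ j) (by simp [hv_def])
  -- distinct roots case
  have hdist : ∀ a b : ℝ, 0 ≤ a → a < b → (∏ i, (lam i + a)) = 0 → (∏ i, (lam i + b)) = 0 → False := by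
    intro a b ha hab g0a g0b
    have := grow lam hn hΓ ha (le_of_lt hab)
    rw [g0a, g0b] at this
    nlinarith
  rcases lt_trichotomy u v with h | h | h
  · exact hdist u v hu h gu gv
  · -- equal roots : lam j = lam i₀ = -u
    have hlam_j : lam j = -u := by rw [hu_def] at h ⊢; linarith [hv_def ▸ h]
    have hlam_i : lam i₀ = -u := by simp [hu_def]
    set s' : Finset (Fin n) := (univ.erase i₀).erase j with hs'
    set M : ℝ := ∏ i ∈ s', (u + 1 + |lam i|) with hM
    have hMpos : 0 < M := Finset.prod_pos (fun i _ => by positivity)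
    set δ : ℝ := min 1 (esym (n-1) univ lam / (2*M)) with hδ
    have hδpos : 0 < δ := lt_min one_pos (by positivity)
    have hδ1 : δ ≤ 1 := min_le_left _ _
    have hδ2 : δ ≤ esym (n-1) univ lam / (2*M) := min_le_right _ _
    -- lower bound
    have hlow : esym (n-1) univ lam * δ ≤ ∏ i, (lam i + (u + δ)) := by
      have := grow lam hn hΓ hu (by linarith : u ≤ u + δ)
      rw [gu] at this
      have hxu : u + δ - u = δ := by ring
      rw [hxu] at this; linarith
    -- product factorization
    have hjmem : j ∈ univ.erase i₀ := mem_erase.2 ⟨hj, mem_univ j⟩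
    have e1 : lam i₀ + (u + δ) = δ := by rw [hlam_i]; ring
    have e2 : lam j + (u + δ) = δ := by rw [hlam_j]; ring
    have hfact : ∏ i, (lam i + (u + δ)) = δ * (δ * ∏ i ∈ s', (lam i + (u + δ))) := by
      rw [← Finset.mul_prod_erase univ (fun i => lam i + (u + δ)) (mem_univ i₀),
        ← Finset.mul_prod_erase _ (fun i => lam i + (u + δ)) hjmem]
      simp only [e1, e2, ← hs']
    -- upper bound on the remaining product
    have hH : ∏ i ∈ s', (lam i + (u + δ)) ≤ M := by
      calc ∏ i ∈ s', (lam i + (u + δ)) ≤ |∏ i ∈ s', (lam i + (u + δ))| := le_abs_self _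
        _ = ∏ i ∈ s', |lam i + (u + δ)| := Finset.abs_prod _ _
        _ ≤ M := by
            apply Finset.prod_le_prod (fun i _ => abs_nonneg _)
            intro i _
            calc |lam i + (u + δ)| ≤ |lam i| + |u + δ| := abs_add_le _ _
              _ ≤ u + 1 + |lam i| := by
                  rw [abs_of_nonneg (by linarith : (0:ℝ) ≤ u + δ)]; linarith
    have hup : ∏ i, (lam i + (u + δ)) ≤ δ * (esym (n-1) univ lam / 2) := by
      rw [hfact]
      have h1' : δ * ∏ i ∈ s', (lam i + (u + δ)) ≤ δ * M := by
        apply mul_le_mul_of_nonneg_left hH (le_of_lt hδpos)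
      have h2' : δ * M ≤ esym (n-1) univ lam / 2 := by
        have := mul_le_mul_of_nonneg_right hδ2 (le_of_lt hMpos)
        calc δ * M ≤ esym (n-1) univ lam / (2*M) * M := this
          _ = esym (n-1) univ lam / 2 := by field_simp
      calc δ * (δ * ∏ i ∈ s', (lam i + (u + δ))) ≤ δ * (δ * M) :=
            mul_le_mul_of_nonneg_left h1' (le_of_lt hδpos)
        _ ≤ δ * (esym (n-1) univ lam / 2) := mul_le_mul_of_nonneg_left h2' (le_of_lt hδpos)
    nlinarith
  · exact hdist v u hv h gv gu

-- symmetry of off-diagonal double sums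
lemma offdiag_swap {α : Type*} [DecidableEq α] (T : Finset α) (g : α → α → ℝ) :
    ∑ p ∈ T, ∑ q ∈ T.erase p, g p q = ∑ p ∈ T, ∑ q ∈ T.erase p, g q p := by
  have h1 : ∀ (f : α → α → ℝ) (p : α), ∑ q ∈ T.erase p, f p q
      = ∑ q ∈ T, if q ≠ p then f p q else 0 := by
    intro f p; rw [← Finset.filter_ne', Finset.sum_filter]
  calc ∑ p ∈ T, ∑ q ∈ T.erase p, g p q
      = ∑ p ∈ T, ∑ q ∈ T, if q ≠ p then g p q else 0 := Finset.sum_congr rfl (fun p _ => h1 g p)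
    _ = ∑ q ∈ T, ∑ p ∈ T, if q ≠ p then g p q else 0 := Finset.sum_comm
    _ = ∑ p ∈ T, ∑ q ∈ T, if q ≠ p then g q p else 0 := by
        apply Finset.sum_congr rfl; intro p _
        apply Finset.sum_congr rfl; intro q _
        exact if_congr ne_comm rfl rfl
    _ = ∑ p ∈ T, ∑ q ∈ T.erase p, g q p := (Finset.sum_congr rfl (fun p _ => (h1 (fun a b => g b a) p).symm))

-- Cauchy-Schwarz : Y² ≤ A C
lemma cauchy_YAC {α : Type*} (T : Finset α) (μ ξ : α → ℝ) (hμ : ∀ p ∈ T, 0 ≤ μ p) :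
    (∑ p ∈ T, μ p * ξ p) ^ 2 ≤ (∑ p ∈ T, μ p) * ∑ p ∈ T, μ p * ξ p ^ 2 := by
  have := Finset.sum_mul_sq_le_sq_mul_sq T (fun p => Real.sqrt (μ p)) (fun p => Real.sqrt (μ p) * ξ p)
  have e1 : ∀ p ∈ T, Real.sqrt (μ p) * (Real.sqrt (μ p) * ξ p) = μ p * ξ p := by
    intro p hp; rw [← mul_assoc, Real.mul_self_sqrt (hμ p hp)]
  have e2 : ∀ p ∈ T, Real.sqrt (μ p) ^ 2 = μ p := fun p hp => Real.sq_sqrt (hμ p hp)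
  have e3 : ∀ p ∈ T, (Real.sqrt (μ p) * ξ p) ^ 2 = μ p * ξ p ^ 2 := by
    intro p hp; rw [mul_pow, Real.sq_sqrt (hμ p hp)]
  rwa [Finset.sum_congr rfl e1, Finset.sum_congr rfl e2, Finset.sum_congr rfl e3] at this

-- key inequality : 2 A C ≤ A² B + Y²
lemma key_ineq {α : Type*} [DecidableEq α] (T : Finset α) (μ ξ : α → ℝ)
    (hμ : ∀ p ∈ T, 0 ≤ μ p) :
    2 * ((∑ p ∈ T, μ p) * ∑ p ∈ T, μ p * ξ p ^ 2) ≤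
      (∑ p ∈ T, μ p) * (∑ p ∈ T, μ p) * (∑ p ∈ T, ξ p ^ 2)
        + (∑ p ∈ T, μ p * ξ p) ^ 2 := by
  set A := ∑ p ∈ T, μ p with hA
  -- A²B - 2AC = ∑ ((A - μ p)² - μ p²) ξ p²
  have step_a : A * A * (∑ p ∈ T, ξ p ^ 2) - 2 * (A * ∑ p ∈ T, μ p * ξ p ^ 2)
      = ∑ p ∈ T, (((A - μ p) ^ 2 - μ p ^ 2) * ξ p ^ 2) := by
    have : ∀ p ∈ T, ((A - μ p) ^ 2 - μ p ^ 2) * ξ p ^ 2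
        = A * A * ξ p ^ 2 - 2 * (A * (μ p * ξ p ^ 2)) := by intro p _; ring
    rw [Finset.sum_congr rfl this, Finset.sum_sub_distrib, ← Finset.mul_sum, ← Finset.mul_sum,
      ← Finset.mul_sum]
  -- Y² = ∑ (μ p ξ p)² + ∑_p ∑_{q ≠ p} (μ p ξ p)(μ q ξ q)
  have step_b : (∑ p ∈ T, μ p * ξ p) ^ 2
      = ∑ p ∈ T, (μ p * ξ p) ^ 2 + ∑ p ∈ T, ∑ q ∈ T.erase p, (μ p * ξ p) * (μ q * ξ q) := by
    rw [sq, Finset.sum_mul_sum, ← Finset.sum_add_distrib]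
    apply Finset.sum_congr rfl
    intro p hp
    rw [← Finset.add_sum_erase _ _ hp, sq]
  -- (A - μ p)² ≥ ∑_{q≠p} μ q²
  have step_d : ∀ p ∈ T, ∑ q ∈ T.erase p, μ q ^ 2 ≤ (A - μ p) ^ 2 := by
    intro p hp
    have he : ∑ q ∈ T.erase p, μ q = A - μ p := by
      rw [hA, ← Finset.add_sum_erase _ _ hp]; ring
    rw [← he]
    exact Finset.sum_sq_le_sq_sum_of_nonneg (fun q hq => hμ q (Finset.mem_erase.1 hq).2)
  -- main pair bound
  have pair : 0 ≤ ∑ p ∈ T, ∑ q ∈ T.erase p, (μ q ^ 2 * ξ p ^ 2 + (μ p * ξ p) * (μ q * ξ q)) := by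
    have htwo : 2 * ∑ p ∈ T, ∑ q ∈ T.erase p, (μ q ^ 2 * ξ p ^ 2 + (μ p * ξ p) * (μ q * ξ q))
        = ∑ p ∈ T, ∑ q ∈ T.erase p, (μ q * ξ p + μ p * ξ q) ^ 2 := by
      have swap := offdiag_swap T (fun p q => μ q ^ 2 * ξ p ^ 2)
      have expand : ∀ p ∈ T, ∀ q ∈ T.erase p,
          (μ q * ξ p + μ p * ξ q) ^ 2 = (μ q ^ 2 * ξ p ^ 2 + (μ p * ξ p) * (μ q * ξ q))
            + (μ p ^ 2 * ξ q ^ 2 + (μ p * ξ p) * (μ q * ξ q)) := by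
        intro p _ q _; ring
    -- 2 * LHS = LHS + (swapped version of first part + same cross part)
      calc 2 * ∑ p ∈ T, ∑ q ∈ T.erase p, (μ q ^ 2 * ξ p ^ 2 + (μ p * ξ p) * (μ q * ξ q))
          = (∑ p ∈ T, ∑ q ∈ T.erase p, (μ q ^ 2 * ξ p ^ 2 + (μ p * ξ p) * (μ q * ξ q)))
            + ((∑ p ∈ T, ∑ q ∈ T.erase p, μ q ^ 2 * ξ p ^ 2)
              + ∑ p ∈ T, ∑ q ∈ T.erase p, (μ p * ξ p) * (μ q * ξ q)) := by
            simp only [Finset.sum_add_distrib]; try ring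
        _ = (∑ p ∈ T, ∑ q ∈ T.erase p, (μ q ^ 2 * ξ p ^ 2 + (μ p * ξ p) * (μ q * ξ q)))
            + ((∑ p ∈ T, ∑ q ∈ T.erase p, μ p ^ 2 * ξ q ^ 2)
              + ∑ p ∈ T, ∑ q ∈ T.erase p, (μ p * ξ p) * (μ q * ξ q)) := by rw [swap]
        _ = ∑ p ∈ T, ∑ q ∈ T.erase p, (μ q * ξ p + μ p * ξ q) ^ 2 := by
            simp only [← Finset.sum_add_distrib]
            apply Finset.sum_congr rfl; intro p hp
            apply Finset.sum_congr rfl; intro q hq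
            rw [expand p hp q hq]
    have hnn : 0 ≤ ∑ p ∈ T, ∑ q ∈ T.erase p, (μ q * ξ p + μ p * ξ q) ^ 2 :=
      Finset.sum_nonneg (fun p _ => Finset.sum_nonneg (fun q _ => sq_nonneg _))
    linarith [htwo ▸ hnn]
  -- assemble
  have hsum_d : ∑ p ∈ T, (∑ q ∈ T.erase p, μ q ^ 2) * ξ p ^ 2
      ≤ ∑ p ∈ T, (A - μ p) ^ 2 * ξ p ^ 2 := by
    apply Finset.sum_le_sum
    intro p hp
    exact mul_le_mul_of_nonneg_right (step_d p hp) (sq_nonneg _)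
  have hrw : ∑ p ∈ T, (∑ q ∈ T.erase p, μ q ^ 2) * ξ p ^ 2
      = ∑ p ∈ T, ∑ q ∈ T.erase p, μ q ^ 2 * ξ p ^ 2 := by
    apply Finset.sum_congr rfl; intro p _; rw [Finset.sum_mul]
  have hc : ∑ p ∈ T, (μ p * ξ p) ^ 2 = ∑ p ∈ T, μ p ^ 2 * ξ p ^ 2 := by
    apply Finset.sum_congr rfl; intro p _; ring
  -- combine: A²B - 2AC + Y² = ∑ (A-μp)²ξp² - ∑ μp²ξp² + ∑ (μpξp)² + cross ≥ 0
  have final : 0 ≤ A * A * (∑ p ∈ T, ξ p ^ 2) - 2 * (A * ∑ p ∈ T, μ p * ξ p ^ 2)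
      + (∑ p ∈ T, μ p * ξ p) ^ 2 := by
    rw [step_a, step_b, hc]
    have e : ∑ p ∈ T, (((A - μ p) ^ 2 - μ p ^ 2) * ξ p ^ 2)
        = ∑ p ∈ T, (A - μ p) ^ 2 * ξ p ^ 2 - ∑ p ∈ T, μ p ^ 2 * ξ p ^ 2 := by
      rw [← Finset.sum_sub_distrib]
      apply Finset.sum_congr rfl; intro p _; ring
    rw [e]
    have := pair
    rw [Finset.sum_congr rfl
      (fun p (_ : p ∈ T) => Finset.sum_add_distrib (s := T.erase p)
        (f := fun q => μ q ^ 2 * ξ p ^ 2) (g := fun q => (μ p * ξ p) * (μ q * ξ q)))] at this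
    rw [Finset.sum_add_distrib] at this
    rw [← hrw] at this
    linarith [hsum_d]
  linarith [final]

theorem stmt12 {n : ℕ} (lam : Fin n → ℝ) (i₀ : Fin n)
    (hΓ : ∀ m : ℕ, 1 ≤ m → m ≤ n - 1 → 0 < esym m Finset.univ lam)
    (hσ : esym (n-1) Finset.univ lam = 1)
    (h1 : lam i₀ ≤ 0) (ξ : Fin n → ℝ) :
    0 ≤ ∑ p ∈ Finset.univ \ {i₀}, ∑ q ∈ Finset.univ \ {i₀},
        (if p = q then
            2 * esym (n-2) (({i₀} : Finset (Fin n))ᶜ) lam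
              + 2 * esym (n-2) (({p} : Finset (Fin n))ᶜ) lam
          else
            esym (n-2) (({i₀} : Finset (Fin n))ᶜ) lam
              + (lam p + lam q - 2 * lam i₀)
                * esym (n-3) (({i₀, p, q} : Finset (Fin n))ᶜ) lam)
          * ξ p * ξ q := by
  rcases Nat.lt_or_ge n 2 with hn | hn
  · have hempty : Finset.univ \ ({i₀} : Finset (Fin n)) = ∅ := by
      ext p
      simp only [mem_sdiff, mem_univ, true_and, mem_singleton, notMem_empty, iff_false, not_not]
      have h1' := p.isLt
      have h2' := i₀.isLt
      exact Fin.ext (by omega)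
    rw [hempty]
    simp
  -- main case
  set T : Finset (Fin n) := ({i₀} : Finset (Fin n))ᶜ with hTdef
  have hT : Finset.univ \ ({i₀} : Finset (Fin n)) = T := (compl_eq_univ_sdiff _).symm
  have hmemT : ∀ p, p ∈ T ↔ p ≠ i₀ := by intro p; simp [hTdef]
  have hcardT : T.card = n - 1 := by
    rw [hTdef, card_compl, card_singleton, Fintype.card_fin]
  have hTne : T.Nonempty := Finset.card_pos.mp (by omega)
  have hposT : ∀ p ∈ T, 0 < lam p := fun p hp => lam_pos lam i₀ hn hΓ h1 p ((hmemT p).1 hp)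
  set μ : Fin n → ℝ := fun p => (lam p)⁻¹ with hμdef
  have hμpos : ∀ p ∈ T, 0 < μ p := fun p hp => by
    rw [hμdef]; exact inv_pos.2 (hposT p hp)
  have hinv : ∀ p ∈ T, lam p * μ p = 1 := fun p hp => by
    rw [hμdef]; exact mul_inv_cancel₀ (ne_of_gt (hposT p hp))
  set P : ℝ := ∏ p ∈ T, lam p with hPdef
  have hP : 0 < P := Finset.prod_pos hposT
  -- product facts
  have fact1 : ∀ p ∈ T, ∏ j ∈ T.erase p, lam j = P * μ p := by
    intro p hp
    have hme := Finset.mul_prod_erase T lam hp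
    rw [show P * μ p = P * (lam p)⁻¹ from by rw [hμdef], ← div_eq_mul_inv,
      eq_div_iff (ne_of_gt (hposT p hp)), mul_comm]
    rw [hme, hPdef]
  have fact2 : ∀ p ∈ T, ∀ q ∈ T.erase p, ∏ j ∈ (T.erase p).erase q, lam j = P * μ p * μ q := by
    intro p hp q hq
    have hme := Finset.mul_prod_erase (T.erase p) lam hq
    rw [fact1 p hp] at hme
    have hqT : q ∈ T := (Finset.mem_erase.1 hq).2
    rw [show P * μ p * μ q = P * μ p * (lam q)⁻¹ from by rw [hμdef],
      ← div_eq_mul_inv, eq_div_iff (ne_of_gt (hposT q hqT)), mul_comm]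
    exact hme
  -- esym computations
  have hE1 : esym (n-2) T lam = P * (∑ r ∈ T, μ r) := by
    have hdeg : n - 2 = T.card - 1 := by omega
    rw [hdeg, esym_pred T lam hTne, Finset.sum_congr rfl fact1, ← Finset.mul_sum]
  have huniv_erase : ∀ p ∈ T, (Finset.univ : Finset (Fin n)).erase p = insert i₀ (T.erase p) := by
    intro p hp
    have hpne : p ≠ i₀ := (hmemT p).1 hp
    ext a
    simp only [Finset.mem_erase, Finset.mem_univ, and_true, Finset.mem_insert, hTdef,
      Finset.mem_compl, Finset.mem_singleton]
    constructor
    · intro h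
      by_cases h2 : a = i₀
      · exact Or.inl h2
      · exact Or.inr ⟨h, h2⟩
    · rintro (rfl | ⟨h2, _⟩)
      · exact fun h => hpne h.symm
      · exact h2
  have hi₀notmem : ∀ p, i₀ ∉ T.erase p := by
    intro p h
    exact ((hmemT i₀).1 (Finset.mem_of_mem_erase h)) rfl
  have hE2 : ∀ p ∈ T, esym (n-2) (({p} : Finset (Fin n))ᶜ) lam
      = P * μ p + lam i₀ * (P * μ p * ((∑ r ∈ T, μ r) - μ p)) := by
    intro p hp
    have hcompl : ({p} : Finset (Fin n))ᶜ = insert i₀ (T.erase p) := by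
      rw [compl_eq_univ_sdiff, sdiff_singleton_eq_erase]
      exact huniv_erase p hp
    have hcins : (insert i₀ (T.erase p)).card = n - 1 := by
      rw [Finset.card_insert_of_notMem (hi₀notmem p), Finset.card_erase_of_mem hp]
      omega
    have hdeg : n - 2 = (insert i₀ (T.erase p)).card - 1 := by omega
    rw [hcompl, hdeg, esym_pred _ lam (Finset.insert_nonempty _ _),
      Finset.sum_insert (hi₀notmem p), Finset.erase_insert (hi₀notmem p), fact1 p hp]
    have hrest : ∀ a ∈ T.erase p, ∏ i ∈ (insert i₀ (T.erase p)).erase a, lam i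
        = lam i₀ * (P * μ p * μ a) := by
      intro a ha
      have haT : a ∈ T := Finset.mem_of_mem_erase ha
      have hai : i₀ ≠ a := fun h => (hmemT a).1 haT h.symm
      rw [Finset.erase_insert_of_ne hai,
        Finset.prod_insert (fun h => hi₀notmem p (Finset.mem_of_mem_erase h)),
        fact2 p hp a ha]
    have hsube : ∑ a ∈ T.erase p, μ a = (∑ r ∈ T, μ r) - μ p := by
      have := Finset.add_sum_erase T μ hp
      linarith
    rw [Finset.sum_congr rfl hrest, ← Finset.mul_sum, ← Finset.mul_sum, hsube]
  have hE3 : ∀ p ∈ T, ∀ q ∈ T.erase p, esym (n-3) (({i₀, p, q} : Finset (Fin n))ᶜ) lam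
      = P * μ p * μ q := by
    intro p hp q hq
    have hset : ({i₀, p, q} : Finset (Fin n))ᶜ = (T.erase p).erase q := by
      ext a
      simp only [Finset.mem_compl, Finset.mem_insert, Finset.mem_singleton, Finset.mem_erase,
        hmemT a]
      tauto
    have hc3 : ((T.erase p).erase q).card = n - 3 := by
      rw [Finset.card_erase_of_mem hq, Finset.card_erase_of_mem hp]
      omega
    rw [hset, show n - 3 = ((T.erase p).erase q).card from by omega, esym_top]
    exact fact2 p hp q hq
  -- the constraint σ_{n-1} = 1
  have hσ1 : P + lam i₀ * (P * ∑ r ∈ T, μ r) = 1 := by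
    have huc : (Finset.univ : Finset (Fin n)).card = n := by rw [card_univ, Fintype.card_fin]
    have hune : (Finset.univ : Finset (Fin n)).Nonempty := ⟨i₀, mem_univ i₀⟩
    have hdeg : n - 1 = (Finset.univ : Finset (Fin n)).card - 1 := by omega
    rw [hdeg, esym_pred _ lam hune, ← Finset.add_sum_erase _ _ (mem_univ i₀)] at hσ
    have herase : (Finset.univ : Finset (Fin n)).erase i₀ = T := by
      rw [hTdef, compl_eq_univ_sdiff, sdiff_singleton_eq_erase]
    rw [herase] at hσ
    have hterm : ∀ p ∈ T, ∏ i ∈ (Finset.univ : Finset (Fin n)).erase p, lam i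
        = lam i₀ * (P * μ p) := by
      intro p hp
      rw [huniv_erase p hp, Finset.prod_insert (hi₀notmem p), fact1 p hp]
    rw [Finset.sum_congr rfl hterm, ← Finset.mul_sum, ← Finset.mul_sum, ← hPdef] at hσ
    exact hσ
  -- pointwise identity for the summand
  have step1 : ∀ p ∈ T, ∀ q ∈ T,
      (if p = q then
          2 * esym (n-2) (({i₀} : Finset (Fin n))ᶜ) lam
            + 2 * esym (n-2) (({p} : Finset (Fin n))ᶜ) lam
        else
          esym (n-2) (({i₀} : Finset (Fin n))ᶜ) lam
            + (lam p + lam q - 2 * lam i₀)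
              * esym (n-3) (({i₀, p, q} : Finset (Fin n))ᶜ) lam)
        * ξ p * ξ q
      = (P * ((∑ r ∈ T, μ r) * ξ p)) * ξ q
        + ((P * (μ p * ξ p)) * ξ q + ξ p * (P * (μ q * ξ q)))
        + (2 * (-lam i₀) * (P * (μ p * ξ p))) * (μ q * ξ q)
        + (if p = q then
            (P * ((∑ r ∈ T, μ r) - 2 * (-lam i₀) * ((∑ r ∈ T, μ r) * μ p))) * (ξ p * ξ p)
          else 0) := by
    intro p hp q hq
    by_cases hpq : p = q
    · subst hpq
      rw [if_pos rfl, if_pos rfl, ← hTdef, hE1, hE2 p hp]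
      ring
    · rw [if_neg hpq, if_neg hpq, ← hTdef, hE1,
        hE3 p hp q (Finset.mem_erase.2 ⟨fun h => hpq h.symm, hq⟩)]
      have h1p := hinv p hp
      have h1q := hinv q hq
      linear_combination (P * (ξ p * ξ q) * μ q) * h1p + (P * (ξ p * ξ q) * μ p) * h1q
  -- inner sums
  have inner_eq : ∀ p ∈ T,
      (∑ q ∈ T,
        (if p = q then
            2 * esym (n-2) (({i₀} : Finset (Fin n))ᶜ) lam
              + 2 * esym (n-2) (({p} : Finset (Fin n))ᶜ) lam
          else
            esym (n-2) (({i₀} : Finset (Fin n))ᶜ) lam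
              + (lam p + lam q - 2 * lam i₀)
                * esym (n-3) (({i₀, p, q} : Finset (Fin n))ᶜ) lam)
          * ξ p * ξ q)
      = (P * ((∑ r ∈ T, μ r) * ξ p)) * (∑ r ∈ T, ξ r)
        + ((P * (μ p * ξ p)) * (∑ r ∈ T, ξ r) + ξ p * (P * (∑ r ∈ T, μ r * ξ r)))
        + (2 * (-lam i₀) * (P * (μ p * ξ p))) * (∑ r ∈ T, μ r * ξ r)
        + (P * ((∑ r ∈ T, μ r) - 2 * (-lam i₀) * ((∑ r ∈ T, μ r) * μ p))) * (ξ p * ξ p) := by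
    intro p hp
    rw [Finset.sum_congr rfl (fun q hq => step1 p hp q hq)]
    simp only [Finset.sum_add_distrib, ← Finset.mul_sum, ← Finset.sum_mul, Finset.sum_ite_eq,
      if_pos hp]
  -- full sum
  have hsum :
      (∑ p ∈ T, ∑ q ∈ T,
        (if p = q then
            2 * esym (n-2) (({i₀} : Finset (Fin n))ᶜ) lam
              + 2 * esym (n-2) (({p} : Finset (Fin n))ᶜ) lam
          else
            esym (n-2) (({i₀} : Finset (Fin n))ᶜ) lam
              + (lam p + lam q - 2 * lam i₀)
                * esym (n-3) (({i₀, p, q} : Finset (Fin n))ᶜ) lam)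
          * ξ p * ξ q)
      = P * ((∑ r ∈ T, μ r) * ((∑ r ∈ T, ξ r) * (∑ r ∈ T, ξ r))
          + 2 * ((∑ r ∈ T, ξ r) * (∑ r ∈ T, μ r * ξ r))
          + 2 * (-lam i₀) * ((∑ r ∈ T, μ r * ξ r) * (∑ r ∈ T, μ r * ξ r))
          + (∑ r ∈ T, μ r) * (∑ r ∈ T, ξ r ^ 2)
          - 2 * ((-lam i₀) * ((∑ r ∈ T, μ r) * (∑ r ∈ T, μ r * ξ r ^ 2)))) := by
    rw [Finset.sum_congr rfl inner_eq]
    simp only [Finset.sum_add_distrib, ← Finset.sum_mul, ← Finset.mul_sum]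
    have hdiag : (∑ p ∈ T,
        (P * ((∑ r ∈ T, μ r) - 2 * (-lam i₀) * ((∑ r ∈ T, μ r) * μ p))) * (ξ p * ξ p))
        = P * ((∑ r ∈ T, μ r) * (∑ r ∈ T, ξ r ^ 2))
          - 2 * (-lam i₀) * (P * ((∑ r ∈ T, μ r) * (∑ r ∈ T, μ r * ξ r ^ 2))) := by
      have hpt : ∀ p ∈ T,
          (P * ((∑ r ∈ T, μ r) - 2 * (-lam i₀) * ((∑ r ∈ T, μ r) * μ p))) * (ξ p * ξ p)
          = P * ((∑ r ∈ T, μ r) * ξ p ^ 2)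
            - 2 * (-lam i₀) * (P * ((∑ r ∈ T, μ r) * (μ p * ξ p ^ 2))) := by
        intro p _; ring
      rw [Finset.sum_congr rfl hpt, Finset.sum_sub_distrib]
      simp only [← Finset.mul_sum]
    rw [hdiag]
    ring
  rw [hT, hsum]
  -- final scalar inequality
  have hCS := cauchy_YAC T μ ξ (fun p hp => (hμpos p hp).le)
  have hKey := key_ineq T μ ξ (fun p hp => (hμpos p hp).le)
  have hA : 0 < ∑ r ∈ T, μ r := Finset.sum_pos hμpos hTne
  have ht : 0 ≤ -lam i₀ := by linarith
  have htA : (-lam i₀) * (∑ r ∈ T, μ r) ≤ 1 := by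
    by_contra hc
    push_neg at hc
    have hgt : 0 < P * ((-lam i₀) * (∑ r ∈ T, μ r) - 1) := mul_pos hP (by linarith)
    nlinarith [hσ1]
  apply mul_nonneg hP.le
  have h2 := sq_nonneg ((∑ r ∈ T, μ r) * (∑ r ∈ T, ξ r) + (∑ r ∈ T, μ r * ξ r))
  have h3 : 0 ≤ (1 - (-lam i₀) * (∑ r ∈ T, μ r))
      * ((∑ r ∈ T, μ r) * (∑ r ∈ T, μ r * ξ r ^ 2) - (∑ r ∈ T, μ r * ξ r) ^ 2) :=
    mul_nonneg (by linarith) (by linarith)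
  have hAF : (∑ r ∈ T, μ r) * ((∑ r ∈ T, μ r) * ((∑ r ∈ T, ξ r) * (∑ r ∈ T, ξ r))
          + 2 * ((∑ r ∈ T, ξ r) * (∑ r ∈ T, μ r * ξ r))
          + 2 * (-lam i₀) * ((∑ r ∈ T, μ r * ξ r) * (∑ r ∈ T, μ r * ξ r))
          + (∑ r ∈ T, μ r) * (∑ r ∈ T, ξ r ^ 2)
          - 2 * ((-lam i₀) * ((∑ r ∈ T, μ r) * (∑ r ∈ T, μ r * ξ r ^ 2))))
      = ((∑ r ∈ T, μ r) * (∑ r ∈ T, ξ r) + (∑ r ∈ T, μ r * ξ r)) ^ 2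
        + ((∑ r ∈ T, μ r) * (∑ r ∈ T, μ r) * (∑ r ∈ T, ξ r ^ 2)
            + (∑ r ∈ T, μ r * ξ r) ^ 2 - 2 * ((∑ r ∈ T, μ r) * ∑ r ∈ T, μ r * ξ r ^ 2))
        + 2 * ((1 - (-lam i₀) * (∑ r ∈ T, μ r))
            * ((∑ r ∈ T, μ r) * (∑ r ∈ T, μ r * ξ r ^ 2) - (∑ r ∈ T, μ r * ξ r) ^ 2)) := by
    ring
  have hAFnn : 0 ≤ (∑ r ∈ T, μ r) * ((∑ r ∈ T, μ r) * ((∑ r ∈ T, ξ r) * (∑ r ∈ T, ξ r))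
          + 2 * ((∑ r ∈ T, ξ r) * (∑ r ∈ T, μ r * ξ r))
          + 2 * (-lam i₀) * ((∑ r ∈ T, μ r * ξ r) * (∑ r ∈ T, μ r * ξ r))
          + (∑ r ∈ T, μ r) * (∑ r ∈ T, ξ r ^ 2)
          - 2 * ((-lam i₀) * ((∑ r ∈ T, μ r) * (∑ r ∈ T, μ r * ξ r ^ 2)))) := by
    rw [hAF]
    linarith
  exact nonneg_of_mul_nonneg_right hAFnn hA
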